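/- arXiv:1403.3514 — 3 statements merged into one kernel-verified Lean document; each statement's English description precedes it below -/
import Mathlib

section
/- With [s]_x = 1 - x^s, T_s = T [s]_x [s+3]_x / ([s+1]_x [s+2]_x), T = (1+4x+x^2)/(1+x+x^2), g = x(1+x+x^2)/(1+4x+x^2)^2, and X_{s,t} = ([3]_x [s+1]_x [t+1]_x [s+t+3]_x)/([1]_x [s+3]_x [t+3]_x [s+t+1]_x), the identity X_{s,t} = 1 + g T_s T_t X_{s,t} + g^2 T_s T_t X_{s,t} T_{s+1} T_{t+1} X_{s+1,t+1} holds as an identity of rational functions in x, for all natural numbers s, t. -/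
noncomputable section

/-- The field of rational functions in one variable over ℚ. -/
abbrev K := RatFunc ℚ

/-- The formal variable x. -/
def x : K := RatFunc.X

/-- [s]_x = 1 - x^s. -/
def br (s : ℕ) : K := 1 - x ^ s

/-- T = (1+4x+x²)/(1+x+x²). -/
def T : K := (1 + 4 * x + x ^ 2) / (1 + x + x ^ 2)

/-- g = x(1+x+x²)/(1+4x+x²)². -/
def g : K := x * (1 + x + x ^ 2) / (1 + 4 * x + x ^ 2) ^ 2

/-- T_s = T [s]_x [s+3]_x / ([s+1]_x [s+2]_x). -/
def Ts (s : ℕ) : K := T * br s * br (s + 3) / (br (s + 1) * br (s + 2))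

/-- N_{s,t}. -/
def N (s t : ℕ) : K :=
  br 3 * br (s + 2) * br (t + 2) * br (s + t + 3) /
    (br 2 * br (s + 3) * br (t + 3) * br (s + t + 2))

/-- X_{s,t}. -/
def Xc (s t : ℕ) : K :=
  br 3 * br (s + 1) * br (t + 1) * br (s + t + 3) /
    (br 1 * br (s + 3) * br (t + 3) * br (s + t + 1))


lemma poly_ne (p : Polynomial ℚ) (h : p.eval 0 ≠ 0) :
    (algebraMap (Polynomial ℚ) K p) ≠ 0 :=
  RatFunc.algebraMap_ne_zero (fun hz => h (by simp [hz]))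

lemma one_sub_pow_ne (n : ℕ) (hn : 0 < n) : (1 : K) - x ^ n ≠ 0 := by
  have : (1 : K) - x ^ n = algebraMap (Polynomial ℚ) K (1 - Polynomial.X ^ n) := by
    simp only [map_sub, map_pow, map_one, RatFunc.algebraMap_X, x]
  rw [this]
  exact poly_ne _ (by simp [zero_pow hn.ne'])

lemma q1_ne : (1 : K) + x + x ^ 2 ≠ 0 := by
  have : (1 : K) + x + x ^ 2 = algebraMap (Polynomial ℚ) K (1 + Polynomial.X + Polynomial.X ^ 2) := by
    simp only [map_add, map_pow, map_one, RatFunc.algebraMap_X, x]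
  rw [this]
  exact poly_ne _ (by simp)

lemma q2_ne : (1 : K) + 4 * x + x ^ 2 ≠ 0 := by
  have : (1 : K) + 4 * x + x ^ 2 = algebraMap (Polynomial ℚ) K (1 + 4 * Polynomial.X + Polynomial.X ^ 2) := by
    simp only [map_add, map_mul, map_pow, map_one, map_ofNat, RatFunc.algebraMap_X, x]
  rw [this]
  exact poly_ne _ (by simp)

lemma br_ne (n : ℕ) (hn : 0 < n) : br n ≠ 0 := one_sub_pow_ne n hn

set_option maxHeartbeats 1000000 in
lemma gTX (s t : ℕ) : g * Ts s * Ts t * Xc s t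
    = x * br s * br t * br (s+t+3) / (br (s+2) * br (t+2) * br (s+t+1)) := by
  have hx1 := q1_ne
  have hx2 := q2_ne
  have h1 : br 1 ≠ 0 := br_ne 1 (by omega)
  have hs1 : br (s+1) ≠ 0 := br_ne _ (by omega)
  have hs2 : br (s+2) ≠ 0 := br_ne _ (by omega)
  have hs3 : br (s+3) ≠ 0 := br_ne _ (by omega)
  have ht1 : br (t+1) ≠ 0 := br_ne _ (by omega)
  have ht2 : br (t+2) ≠ 0 := br_ne _ (by omega)
  have ht3 : br (t+3) ≠ 0 := br_ne _ (by omega)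
  have hst1 : br (s+t+1) ≠ 0 := br_ne _ (by omega)
  simp only [Xc, Ts, T, g]
  simp only [br, pow_add, pow_one] at *
  obtain ⟨a, ha⟩ : ∃ a : K, x ^ s = a := ⟨_, rfl⟩
  obtain ⟨b, hb⟩ : ∃ b : K, x ^ t = b := ⟨_, rfl⟩
  rw [ha] at hs1 hs2 hs3 hst1 ⊢
  rw [hb] at ht1 ht2 ht3 hst1 ⊢
  have c1 : (1:K) - x^3*a ≠ 0 := by rwa [mul_comm]
  have c2 : (1:K) - x^2*a ≠ 0 := by rwa [mul_comm]
  have c4 : (1:K) - x^3*b ≠ 0 := by rwa [mul_comm]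
  have c5 : (1:K) - x^2*b ≠ 0 := by rwa [mul_comm]
  have c7 : (1:K) - x*a*b ≠ 0 := by convert hst1 using 1; ring
  have c3 : (1:K) - x*a ≠ 0 := by rwa [mul_comm]
  have c6 : (1:K) - x*b ≠ 0 := by rwa [mul_comm]
  have c0 : (1:K) + x*4 + x^2 ≠ 0 := by rwa [mul_comm] at hx2
  field_simp [hx1, hx2, h1, hs1, hs2, hs3, ht1, ht2, ht3, hst1, c1, c2, c3, c4, c5, c6, c7, c0]
  ring

set_option maxHeartbeats 1000000

theorem X_recursion (s t : ℕ) :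
    Xc s t = 1 + g * Ts s * Ts t * Xc s t
      + g ^ 2 * Ts s * Ts t * Xc s t * Ts (s + 1) * Ts (t + 1) * Xc (s + 1) (t + 1) := by
  have hx1 := q1_ne
  have hx2 := q2_ne
  have h1 : br 1 ≠ 0 := br_ne 1 (by omega)
  have hs2 : br (s+2) ≠ 0 := br_ne _ (by omega)
  have hs3 : br (s+3) ≠ 0 := br_ne _ (by omega)
  have ht2 : br (t+2) ≠ 0 := br_ne _ (by omega)
  have ht3 : br (t+3) ≠ 0 := br_ne _ (by omega)
  have hst1 : br (s+t+1) ≠ 0 := br_ne _ (by omega)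
  have hst3 : br (s+t+3) ≠ 0 := br_ne _ (by omega)
  have A := gTX s t
  have B := gTX (s+1) (t+1)
  have eB1 : s+1+(t+1)+3 = s+t+5 := by ring
  have eB2 : s+1+(t+1)+1 = s+t+3 := by ring
  have eB3 : s+1+2 = s+3 := by ring
  have eB4 : t+1+2 = t+3 := by ring
  rw [eB1, eB2, eB3, eB4] at B
  rw [show g ^ 2 * Ts s * Ts t * Xc s t * Ts (s + 1) * Ts (t + 1) * Xc (s + 1) (t + 1)
      = (g * Ts s * Ts t * Xc s t) * (g * Ts (s+1) * Ts (t+1) * Xc (s+1) (t+1)) from by ring,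
    A, B]
  simp only [Xc]
  simp only [br, pow_add, pow_one] at *
  obtain ⟨a, ha⟩ : ∃ a : K, x ^ s = a := ⟨_, rfl⟩
  obtain ⟨b, hb⟩ : ∃ b : K, x ^ t = b := ⟨_, rfl⟩
  rw [ha] at hs2 hs3 hst1 hst3 ⊢
  rw [hb] at ht2 ht3 hst1 hst3 ⊢
  have c1 : (1:K) - x^3*a ≠ 0 := by rwa [mul_comm]
  have c2 : (1:K) - x^2*a ≠ 0 := by rwa [mul_comm]
  have c4 : (1:K) - x^3*b ≠ 0 := by rwa [mul_comm]
  have c5 : (1:K) - x^2*b ≠ 0 := by rwa [mul_comm]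
  have c7 : (1:K) - x*a*b ≠ 0 := by convert hst1 using 1; ring
  have c8 : (1:K) - x^3*a*b ≠ 0 := by convert hst3 using 1; ring
  field_simp [hx1, hx2, h1, hs2, hs3, ht2, ht3, hst1, hst3, c1, c2, c4, c5, c7, c8]
  ring
end
end

section
/- With [s]_x = 1 - x^s, T_s = T [s]_x [s+3]_x / ([s+1]_x [s+2]_x), T = (1+4x+x^2)/(1+x+x^2), g = x(1+x+x^2)/(1+4x+x^2)^2, and N_{s,t} = ([3]_x [s+2]_x [t+2]_x [s+t+3]_x)/([2]_x [s+3]_x [t+3]_x [s+t+2]_x), the identity N_{s,t} = 1 + g^2 T_s T_t N_{s,t} · (T_{s+1} T_{t+1} N_{s+1,t+1}) / (1 - g T_{s+1} T_{t+1} N_{s+1,t+1}) holds as an identity of rational functions in x, for all natural numbers s, t (assuming the denominator 1 - g T_{s+1} T_{t+1} N_{s+1,t+1} is nonzero as a rational function). -/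
noncomputable section

lemma alg_ne {p : Polynomial ℚ} (hp : p ≠ 0) : algebraMap (Polynomial ℚ) K p ≠ 0 := by
  simpa using (RatFunc.algebraMap_ne_zero hp)

lemma br_ne_zero {n : ℕ} (hn : n ≠ 0) : br n ≠ 0 := by
  have e : br n = algebraMap (Polynomial ℚ) K (1 - Polynomial.X ^ n) := by
    simp [br, x, RatFunc.algebraMap_X, map_ofNat]
  rw [e]
  apply alg_ne
  intro hc
  have := congrArg (Polynomial.eval 2) hc
  norm_num at this
  have h2 : (1:ℚ) < 2 ^ n := one_lt_pow₀ (by norm_num) hn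
  linarith

lemma poly1 : (1 + x + x ^ 2 : K) ≠ 0 := by
  have e : (1 + x + x ^ 2 : K) = algebraMap (Polynomial ℚ) K (1 + Polynomial.X + Polynomial.X ^ 2) := by
    simp [x, RatFunc.algebraMap_X, map_ofNat]
  rw [e]
  apply alg_ne
  intro hc
  have := congrArg (Polynomial.eval 1) hc
  norm_num at this

lemma poly4 : (1 + 4 * x + x ^ 2 : K) ≠ 0 := by
  have e : (1 + 4 * x + x ^ 2 : K) = algebraMap (Polynomial ℚ) K (1 + 4 * Polynomial.X + Polynomial.X ^ 2) := by
    simp [x, RatFunc.algebraMap_X, map_ofNat]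
  rw [e]
  apply alg_ne
  intro hc
  have := congrArg (Polynomial.eval 1) hc
  norm_num at this

lemma one_add_x_ne : (1 + x : K) ≠ 0 := by
  have e : (1 + x : K) = algebraMap (Polynomial ℚ) K (1 + Polynomial.X) := by
    simp [x, RatFunc.algebraMap_X]
  rw [e]
  apply alg_ne
  intro hc
  have := congrArg (Polynomial.eval 1) hc
  norm_num at this

set_option maxHeartbeats 1600000 in
lemma Qeq (s t : ℕ) : g * Ts (s + 1) * Ts (t + 1) * N (s + 1) (t + 1) =
    x * br (s + 1) * br (t + 1) * br (s + t + 5) /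
      ((1 + x) * br (s + 2) * br (t + 2) * br (s + t + 4)) := by
  have h1 := br_ne_zero (n := s + 1) (by omega)
  have h2 := br_ne_zero (n := s + 2) (by omega)
  have h3 := br_ne_zero (n := s + 3) (by omega)
  have h4 := br_ne_zero (n := s + 4) (by omega)
  have k1 := br_ne_zero (n := t + 1) (by omega)
  have k2 := br_ne_zero (n := t + 2) (by omega)
  have k3 := br_ne_zero (n := t + 3) (by omega)
  have k4 := br_ne_zero (n := t + 4) (by omega)
  have m4 := br_ne_zero (n := s + t + 4) (by omega)
  have m5 := br_ne_zero (n := s + t + 5) (by omega)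
  have hb3 : (br 3 : K) = (1 - x) * (1 + x + x ^ 2) := by
    simp only [br]; ring
  have hb2 : (br 2 : K) = (1 - x) * (1 + x) := by
    simp only [br]; ring
  have hx1 : (1 - x : K) ≠ 0 := by
    have := br_ne_zero (n := 1) (by omega)
    simpa [br] using this
  rw [N, Ts, Ts, g, T,
    show s + 1 + 1 = s + 2 from by omega, show s + 1 + 2 = s + 3 from by omega,
    show s + 1 + 3 = s + 4 from by omega,
    show t + 1 + 1 = t + 2 from by omega, show t + 1 + 2 = t + 3 from by omega,
    show t + 1 + 3 = t + 4 from by omega,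
    show s + 1 + (t + 1) + 3 = s + t + 5 from by omega,
    show s + 1 + (t + 1) + 2 = s + t + 4 from by omega,
    hb3, hb2]
  obtain ⟨P, hP⟩ : ∃ y : K, (1 + 4 * x + x ^ 2 : K) = y := ⟨_, rfl⟩
  have P0 : P ≠ 0 := hP ▸ poly4
  obtain ⟨R, hR⟩ : ∃ y : K, (1 + x + x ^ 2 : K) = y := ⟨_, rfl⟩
  have R0 : R ≠ 0 := hR ▸ poly1
  obtain ⟨u, hu⟩ : ∃ y : K, (1 - x : K) = y := ⟨_, rfl⟩
  have u0 : u ≠ 0 := hu ▸ hx1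
  obtain ⟨v, hv⟩ : ∃ y : K, (1 + x : K) = y := ⟨_, rfl⟩
  have v0 : v ≠ 0 := hv ▸ one_add_x_ne
  obtain ⟨A1, hA1⟩ : ∃ y : K, (br (s + 1) : K) = y := ⟨_, rfl⟩
  have A10 : A1 ≠ 0 := hA1 ▸ h1
  obtain ⟨A2, hA2⟩ : ∃ y : K, (br (s + 2) : K) = y := ⟨_, rfl⟩
  have A20 : A2 ≠ 0 := hA2 ▸ h2
  obtain ⟨A3, hA3⟩ : ∃ y : K, (br (s + 3) : K) = y := ⟨_, rfl⟩
  have A30 : A3 ≠ 0 := hA3 ▸ h3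
  obtain ⟨A4, hA4⟩ : ∃ y : K, (br (s + 4) : K) = y := ⟨_, rfl⟩
  have A40 : A4 ≠ 0 := hA4 ▸ h4
  obtain ⟨B1, hB1⟩ : ∃ y : K, (br (t + 1) : K) = y := ⟨_, rfl⟩
  have B10 : B1 ≠ 0 := hB1 ▸ k1
  obtain ⟨B2, hB2⟩ : ∃ y : K, (br (t + 2) : K) = y := ⟨_, rfl⟩
  have B20 : B2 ≠ 0 := hB2 ▸ k2
  obtain ⟨B3, hB3⟩ : ∃ y : K, (br (t + 3) : K) = y := ⟨_, rfl⟩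
  have B30 : B3 ≠ 0 := hB3 ▸ k3
  obtain ⟨B4, hB4⟩ : ∃ y : K, (br (t + 4) : K) = y := ⟨_, rfl⟩
  have B40 : B4 ≠ 0 := hB4 ▸ k4
  obtain ⟨C4, hC4⟩ : ∃ y : K, (br (s + t + 4) : K) = y := ⟨_, rfl⟩
  have C40 : C4 ≠ 0 := hC4 ▸ m4
  obtain ⟨C5, hC5⟩ : ∃ y : K, (br (s + t + 5) : K) = y := ⟨_, rfl⟩
  have C50 : C5 ≠ 0 := hC5 ▸ m5
  rw [hP, hR, hu, hv, hA1, hA2, hA3, hA4, hB1, hB2, hB3, hB4, hC4, hC5]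
  simp only [div_pow, mul_pow, div_mul_div_comm, mul_div_assoc', div_div, div_mul_eq_mul_div]
  rw [div_eq_div_iff (by simp [mul_eq_zero, pow_eq_zero_iff, *]) (by simp [mul_eq_zero, pow_eq_zero_iff, *])]
  ring

set_option maxHeartbeats 1600000 in
lemma Aeq (s t : ℕ) : g ^ 2 * Ts s * Ts t * N s t *
      (Ts (s + 1) * Ts (t + 1) * N (s + 1) (t + 1)) =
    x ^ 2 * br s * br t * br (s + t + 3) * br (s + t + 5) /
      ((1 + x) ^ 2 * br (s + 2) * br (t + 2) * br (s + t + 2) * br (s + t + 4)) := by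
  have h1 := br_ne_zero (n := s + 1) (by omega)
  have h2 := br_ne_zero (n := s + 2) (by omega)
  have h3 := br_ne_zero (n := s + 3) (by omega)
  have h4 := br_ne_zero (n := s + 4) (by omega)
  have k1 := br_ne_zero (n := t + 1) (by omega)
  have k2 := br_ne_zero (n := t + 2) (by omega)
  have k3 := br_ne_zero (n := t + 3) (by omega)
  have k4 := br_ne_zero (n := t + 4) (by omega)
  have m2 := br_ne_zero (n := s + t + 2) (by omega)
  have m3 := br_ne_zero (n := s + t + 3) (by omega)
  have m4 := br_ne_zero (n := s + t + 4) (by omega)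
  have m5 := br_ne_zero (n := s + t + 5) (by omega)
  have hb3 : (br 3 : K) = (1 - x) * (1 + x + x ^ 2) := by
    simp only [br]; ring
  have hb2 : (br 2 : K) = (1 - x) * (1 + x) := by
    simp only [br]; ring
  have hx1 : (1 - x : K) ≠ 0 := by
    have := br_ne_zero (n := 1) (by omega)
    simpa [br] using this
  rw [N, N, Ts, Ts, Ts, Ts, g, T,
    show s + 1 + 1 = s + 2 from by omega, show s + 1 + 2 = s + 3 from by omega,
    show s + 1 + 3 = s + 4 from by omega,
    show t + 1 + 1 = t + 2 from by omega, show t + 1 + 2 = t + 3 from by omega,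
    show t + 1 + 3 = t + 4 from by omega,
    show s + 1 + (t + 1) + 3 = s + t + 5 from by omega,
    show s + 1 + (t + 1) + 2 = s + t + 4 from by omega,
    hb3, hb2]
  obtain ⟨P, hP⟩ : ∃ y : K, (1 + 4 * x + x ^ 2 : K) = y := ⟨_, rfl⟩
  have P0 : P ≠ 0 := hP ▸ poly4
  obtain ⟨R, hR⟩ : ∃ y : K, (1 + x + x ^ 2 : K) = y := ⟨_, rfl⟩
  have R0 : R ≠ 0 := hR ▸ poly1
  obtain ⟨u, hu⟩ : ∃ y : K, (1 - x : K) = y := ⟨_, rfl⟩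
  have u0 : u ≠ 0 := hu ▸ hx1
  obtain ⟨v, hv⟩ : ∃ y : K, (1 + x : K) = y := ⟨_, rfl⟩
  have v0 : v ≠ 0 := hv ▸ one_add_x_ne
  obtain ⟨A0, hA0⟩ : ∃ y : K, (br s : K) = y := ⟨_, rfl⟩
  obtain ⟨A1, hA1⟩ : ∃ y : K, (br (s + 1) : K) = y := ⟨_, rfl⟩
  have A10 : A1 ≠ 0 := hA1 ▸ h1
  obtain ⟨A2, hA2⟩ : ∃ y : K, (br (s + 2) : K) = y := ⟨_, rfl⟩
  have A20 : A2 ≠ 0 := hA2 ▸ h2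
  obtain ⟨A3, hA3⟩ : ∃ y : K, (br (s + 3) : K) = y := ⟨_, rfl⟩
  have A30 : A3 ≠ 0 := hA3 ▸ h3
  obtain ⟨A4, hA4⟩ : ∃ y : K, (br (s + 4) : K) = y := ⟨_, rfl⟩
  have A40 : A4 ≠ 0 := hA4 ▸ h4
  obtain ⟨B0, hB0⟩ : ∃ y : K, (br t : K) = y := ⟨_, rfl⟩
  obtain ⟨B1, hB1⟩ : ∃ y : K, (br (t + 1) : K) = y := ⟨_, rfl⟩
  have B10 : B1 ≠ 0 := hB1 ▸ k1
  obtain ⟨B2, hB2⟩ : ∃ y : K, (br (t + 2) : K) = y := ⟨_, rfl⟩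
  have B20 : B2 ≠ 0 := hB2 ▸ k2
  obtain ⟨B3, hB3⟩ : ∃ y : K, (br (t + 3) : K) = y := ⟨_, rfl⟩
  have B30 : B3 ≠ 0 := hB3 ▸ k3
  obtain ⟨B4, hB4⟩ : ∃ y : K, (br (t + 4) : K) = y := ⟨_, rfl⟩
  have B40 : B4 ≠ 0 := hB4 ▸ k4
  obtain ⟨C2, hC2⟩ : ∃ y : K, (br (s + t + 2) : K) = y := ⟨_, rfl⟩
  have C20 : C2 ≠ 0 := hC2 ▸ m2
  obtain ⟨C3, hC3⟩ : ∃ y : K, (br (s + t + 3) : K) = y := ⟨_, rfl⟩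
  have C30 : C3 ≠ 0 := hC3 ▸ m3
  obtain ⟨C4, hC4⟩ : ∃ y : K, (br (s + t + 4) : K) = y := ⟨_, rfl⟩
  have C40 : C4 ≠ 0 := hC4 ▸ m4
  obtain ⟨C5, hC5⟩ : ∃ y : K, (br (s + t + 5) : K) = y := ⟨_, rfl⟩
  have C50 : C5 ≠ 0 := hC5 ▸ m5
  rw [hP, hR, hu, hv, hA0, hA1, hA2, hA3, hA4, hB0, hB1, hB2, hB3, hB4, hC2, hC3, hC4, hC5]
  simp only [div_pow, mul_pow, div_mul_div_comm, mul_div_assoc', div_div, div_mul_eq_mul_div]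
  rw [div_eq_div_iff (by simp [mul_eq_zero, pow_eq_zero_iff, *]) (by simp [mul_eq_zero, pow_eq_zero_iff, *])]
  ring

lemma frac_identity (n1 n2 q1 q2 a1 a2 : K) (hn2 : n2 ≠ 0) (hq2 : q2 ≠ 0) (ha2 : a2 ≠ 0)
    (hkey : (n1 - n2) * (q2 - q1) * a2 = a1 * (n2 * q2)) :
    (n1 / n2 - 1) * (1 - q1 / q2) = a1 / a2 := by
  have l1 : n1 / n2 - 1 = (n1 - n2) / n2 := by rw [sub_div, div_self hn2]
  have l2 : (1 : K) - q1 / q2 = (q2 - q1) / q2 := by rw [sub_div, div_self hq2]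
  rw [l1, l2, div_mul_div_comm, div_eq_div_iff (mul_ne_zero hn2 hq2) ha2, hkey]

set_option maxHeartbeats 1000000 in
theorem N_recursion (s t : ℕ)
    (h : 1 - g * Ts (s + 1) * Ts (t + 1) * N (s + 1) (t + 1) ≠ 0) :
    N s t = 1 + g ^ 2 * Ts s * Ts t * N s t *
      (Ts (s + 1) * Ts (t + 1) * N (s + 1) (t + 1) /
        (1 - g * Ts (s + 1) * Ts (t + 1) * N (s + 1) (t + 1))) := by
  rw [← sub_eq_iff_eq_add', mul_div_assoc', eq_div_iff h]
  rw [Qeq, Aeq]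
  have h2 := br_ne_zero (n := s + 2) (by omega)
  have h3 := br_ne_zero (n := s + 3) (by omega)
  have k2 := br_ne_zero (n := t + 2) (by omega)
  have k3 := br_ne_zero (n := t + 3) (by omega)
  have m2 := br_ne_zero (n := s + t + 2) (by omega)
  have m4 := br_ne_zero (n := s + t + 4) (by omega)
  have b2 := br_ne_zero (n := 2) (by omega)
  have hD : (1 + x) * br (s + 2) * br (t + 2) * br (s + t + 4) ≠ 0 := by
    exact mul_ne_zero (mul_ne_zero (mul_ne_zero one_add_x_ne h2) k2) m4
  have b2 := br_ne_zero (n := 2) (by omega)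
  have hv : (1 + x : K) ≠ 0 := one_add_x_ne
  have hn2 : br 2 * br (s + 3) * br (t + 3) * br (s + t + 2) ≠ 0 :=
    mul_ne_zero (mul_ne_zero (mul_ne_zero b2 h3) k3) m2
  have hq2 : (1 + x) * br (s + 2) * br (t + 2) * br (s + t + 4) ≠ 0 :=
    mul_ne_zero (mul_ne_zero (mul_ne_zero hv h2) k2) m4
  have ha2 : (1 + x) ^ 2 * br (s + 2) * br (t + 2) * br (s + t + 2) * br (s + t + 4) ≠ 0 :=
    mul_ne_zero (mul_ne_zero (mul_ne_zero (mul_ne_zero (pow_ne_zero 2 hv) h2) k2) m2) m4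
  rw [N]
  apply frac_identity _ _ _ _ _ _ hn2 hq2 ha2
  simp only [br]
  ring
end
end

section
/- Let M be a finite connected graph with two distinguished distinct vertices v₁, v₂ at graph distance d(v₁,v₂) = s+t, where s, t are positive integers. Then the labelling ℓ₀(v) = min(d(v,v₁) − s, d(v,v₂) − t) is the unique integer labelling ℓ of the vertices of M such that: (i) |ℓ(v) − ℓ(w)| ≤ 1 for every edge {v,w}; (ii) v₁ and v₂ are the only local minima of ℓ (i.e., the only vertices whose label is not larger than all their neighbours' labels); (iii) ℓ(v₁) = −s and ℓ(v₂) = −t. -/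
lemma walk_abs_le {V : Type*} {G : SimpleGraph V} (l : V → ℤ)
    (hl : ∀ v w, G.Adj v w → |l v - l w| ≤ 1) {u v : V} (p : G.Walk u v) :
    |l u - l v| ≤ p.length := by
  induction p with
  | nil => simp
  | @cons a b c h p ih =>
    have := abs_sub_le (l a) (l b) (l c)
    have h1 := hl a b h
    simp only [SimpleGraph.Walk.length_cons]
    push_cast
    omega

lemma exists_adj_dist {V : Type*} {G : SimpleGraph V} (hconn : G.Connected) {v u : V} {n : ℕ}
    (h : G.dist v u = n + 1) : ∃ w, G.Adj v w ∧ G.dist w u = n := by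
  obtain ⟨p, hp⟩ := hconn.exists_walk_length_eq_dist v u
  cases p with
  | nil => simp [SimpleGraph.dist_self] at h
  | cons hadj q =>
    rename_i b
    refine ⟨b, hadj, ?_⟩
    have h1 : G.dist b u ≤ q.length := SimpleGraph.dist_le q
    obtain ⟨q', hq'⟩ := hconn.exists_walk_length_eq_dist b u
    have h2 : G.dist v u ≤ (SimpleGraph.Walk.cons hadj q').length := SimpleGraph.dist_le _
    simp only [SimpleGraph.Walk.length_cons] at h2 hp
    omega

/-- A vertex is a local minimum of a labelling if its label is not larger than those of all
its neighbours. -/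
def IsLocalMinLabel {V : Type*} (G : SimpleGraph V) (l : V → ℤ) (v : V) : Prop :=
  ∀ w, G.Adj v w → l v ≤ l w

theorem unique_st_well_labelling {V : Type*} [Fintype V] (G : SimpleGraph V)
    (hconn : G.Connected) (v₁ v₂ : V) (hne : v₁ ≠ v₂) (s t : ℕ)
    (hs : 0 < s) (ht : 0 < t) (hdist : G.dist v₁ v₂ = s + t) :
    (∀ v w, G.Adj v w →
        |(min ((G.dist v v₁ : ℤ) - s) ((G.dist v v₂ : ℤ) - t)) -
          (min ((G.dist w v₁ : ℤ) - s) ((G.dist w v₂ : ℤ) - t))| ≤ 1) ∧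
    (∀ v, IsLocalMinLabel G
        (fun v => min ((G.dist v v₁ : ℤ) - s) ((G.dist v v₂ : ℤ) - t)) v ↔
        v = v₁ ∨ v = v₂) ∧
    (min ((G.dist v₁ v₁ : ℤ) - s) ((G.dist v₁ v₂ : ℤ) - t) = -s) ∧
    (min ((G.dist v₂ v₁ : ℤ) - s) ((G.dist v₂ v₂ : ℤ) - t) = -t) ∧
    (∀ l : V → ℤ,
      (∀ v w, G.Adj v w → |l v - l w| ≤ 1) →
      (∀ v, IsLocalMinLabel G l v ↔ v = v₁ ∨ v = v₂) →
      l v₁ = -s → l v₂ = -t →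
      l = fun v => min ((G.dist v v₁ : ℤ) - s) ((G.dist v v₂ : ℤ) - t)) := by
  set L : V → ℤ := fun v => min ((G.dist v v₁ : ℤ) - s) ((G.dist v v₂ : ℤ) - t) with hL
  -- basic facts
  have hadj1 : ∀ v w : V, G.Adj v w → G.dist v w ≤ 1 := fun v w h =>
    SimpleGraph.dist_le (SimpleGraph.Walk.cons h SimpleGraph.Walk.nil)
  have htri : ∀ a b c : V, G.dist a c ≤ G.dist a b + G.dist b c := fun a b c =>
    hconn.dist_triangle
  have hlipd : ∀ (v w x : V), G.Adj v w → G.dist v x ≤ G.dist w x + 1 := by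
    intro v w x h
    have := htri v w x
    have := hadj1 v w h
    omega
  -- (i) Lipschitz
  have part1 : ∀ v w, G.Adj v w → |L v - L w| ≤ 1 := by
    intro v w h
    have h1 := hlipd v w v₁ h
    have h2 := hlipd w v v₁ h.symm
    have h3 := hlipd v w v₂ h
    have h4 := hlipd w v v₂ h.symm
    simp only [hL, abs_sub_le_iff]
    omega
  have hself1 : G.dist v₁ v₁ = 0 := SimpleGraph.dist_self
  have hself2 : G.dist v₂ v₂ = 0 := SimpleGraph.dist_self
  have hdist' : G.dist v₂ v₁ = s + t := by rw [SimpleGraph.dist_comm]; exact hdist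
  have part3 : L v₁ = -s := by simp only [hL, hself1, hdist]; push_cast; omega
  have part4 : L v₂ = -t := by simp only [hL, hself2, hdist']; push_cast; omega
  -- (ii) local minima
  have part2 : ∀ v, IsLocalMinLabel G L v ↔ v = v₁ ∨ v = v₂ := by
    intro v
    constructor
    · intro hmin
      by_contra hcon
      push_neg at hcon
      obtain ⟨h1, h2⟩ := hcon
      have hd1 : G.dist v v₁ ≠ 0 := fun h => h1 (hconn.dist_eq_zero_iff.mp h)
      have hd2 : G.dist v v₂ ≠ 0 := fun h => h2 (hconn.dist_eq_zero_iff.mp h)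
      rcases le_total ((G.dist v v₁ : ℤ) - s) ((G.dist v v₂ : ℤ) - t) with hc | hc
      · obtain ⟨n, hn⟩ : ∃ n, G.dist v v₁ = n + 1 := ⟨G.dist v v₁ - 1, by omega⟩
        obtain ⟨w, hw, hwd⟩ := exists_adj_dist hconn hn
        have := hmin w hw
        have hLw : L w ≤ (G.dist w v₁ : ℤ) - s := min_le_left _ _
        have hLv : L v = (G.dist v v₁ : ℤ) - s := min_eq_left hc
        omega
      · obtain ⟨n, hn⟩ : ∃ n, G.dist v v₂ = n + 1 := ⟨G.dist v v₂ - 1, by omega⟩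
        obtain ⟨w, hw, hwd⟩ := exists_adj_dist hconn hn
        have := hmin w hw
        have hLw : L w ≤ (G.dist w v₂ : ℤ) - t := min_le_right _ _
        have hLv : L v = (G.dist v v₂ : ℤ) - t := min_eq_right hc
        omega
    · have min1 : IsLocalMinLabel G L v₁ := by
        intro w hw
        have h1 := htri v₁ w v₂
        have h2 := hadj1 v₁ w hw
        rw [part3]
        simp only [hL, le_min_iff]
        omega
      have min2 : IsLocalMinLabel G L v₂ := by
        intro w hw
        have h1 := htri v₂ w v₁
        have h2 := hadj1 v₂ w hw
        rw [part4]
        simp only [hL, le_min_iff]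
        omega
      rintro (h | h) <;> rw [h]
      · exact min1
      · exact min2
  refine ⟨part1, part2, part3, part4, ?_⟩
  -- uniqueness
  intro l hlip hloc hl1 hl2
  have hub : ∀ v, l v ≤ L v := by
    intro v
    obtain ⟨p1, hp1⟩ := hconn.exists_walk_length_eq_dist v v₁
    obtain ⟨p2, hp2⟩ := hconn.exists_walk_length_eq_dist v v₂
    have h1 := walk_abs_le l hlip p1
    have h2 := walk_abs_le l hlip p2
    rw [hp1] at h1; rw [hp2] at h2
    rw [abs_sub_le_iff] at h1 h2
    simp only [hL, le_min_iff]
    omega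
  have hlb : ∀ v, L v ≤ l v := by
    by_contra hcon
    push_neg at hcon
    set S : Finset V := Finset.univ.filter (fun v => l v < L v) with hS
    have hSne : S.Nonempty := by
      obtain ⟨v, hv⟩ := hcon
      exact ⟨v, by simp [hS]; omega⟩
    obtain ⟨v, hvS, hvmin⟩ := S.exists_min_image l hSne
    have hv : l v < L v := by simpa [hS] using hvS
    have hlocmin : IsLocalMinLabel G l v := by
      intro w hw
      by_contra hcw
      push_neg at hcw
      have hLp := part1 v w hw
      rw [abs_sub_le_iff] at hLp
      have hwS : w ∈ S := by simp [hS]; omega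
      have := hvmin w hwS
      omega
    rcases (hloc v).mp hlocmin with rfl | rfl
    · omega
    · omega
  funext v
  have := hub v
  have := hlb v
  simp only [hL] at *
  omega
end
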